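/- Define the sequence d_m (polynomials in z) by d_0 = 1, d_1 = 1, d_2 = 1 - z^2, d_m = d_{m-1} - z^2 d_{m-3}. Let a_{n,k}^{(h)} count Deutsch paths of length n ending at level k that stay within 0 ≤ level ≤ h. Then the generating function f_k^{(h)}(z) = Σ_n a_{n,k}^{(h)} z^n equals z^k · d_{h-k} / d_{h+1}, for 0 ≤ k ≤ h. -/

import Mathlib

/-- A Deutsch step: up-step 1 or a down-step -1, -3, -5, .... -/
def DeutschStep (s : ℤ) : Prop := s = 1 ∨ ∃ j : ℕ, s = -(2 * j + 1)

/-- A Deutsch path: all steps are Deutsch steps and all partial sums (heights)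
are nonnegative. -/
def IsDeutschPath (p : List ℤ) : Prop :=
  (∀ s ∈ p, DeutschStep s) ∧ ∀ m : ℕ, 0 ≤ (p.take m).sum

/-- Number of Deutsch paths from (0,0) to (n,k). -/
noncomputable def deutschCount (n k : ℕ) : ℕ :=
  Nat.card {p : List ℤ // p.length = n ∧ IsDeutschPath p ∧ p.sum = (k : ℤ)}

/-- Number of Deutsch paths from (0,0) to (n,k) staying within 0 ≤ height ≤ h. -/
noncomputable def deutschCountBounded (h n k : ℕ) : ℕ :=
  Nat.card {p : List ℤ // p.length = n ∧ IsDeutschPath p ∧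
    (∀ m : ℕ, (p.take m).sum ≤ (h : ℤ)) ∧ p.sum = (k : ℤ)}

def Sset (h n : ℕ) (k : ℤ) : Set (List ℤ) :=
  {p | p.length = n ∧ IsDeutschPath p ∧ (∀ m : ℕ, (p.take m).sum ≤ (h : ℤ)) ∧ p.sum = k}

def steps (h : ℕ) : Finset ℤ :=
  insert 1 ((Finset.range h).image (fun j : ℕ => -(2 * (j : ℤ) + 1)))

lemma deutschCountBounded_eq_ncard (h n k : ℕ) :
    deutschCountBounded h n k = (Sset h n (k : ℤ)).ncard := by
  rw [deutschCountBounded, ← Nat.card_coe_set_eq]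
  rfl

lemma Sset_zero (h : ℕ) (k : ℤ) : Sset h 0 k = if k = 0 then {([] : List ℤ)} else ∅ := by
  ext p
  constructor
  · rintro ⟨hl, _, _, hs⟩
    rw [List.length_eq_zero_iff] at hl
    subst hl
    simp at hs
    simp [← hs]
  · intro hp
    split_ifs at hp with hk
    · simp at hp
      subst hp hk
      refine ⟨rfl, ⟨by simp, fun m => by simp⟩, fun m => by simp [Int.ofNat_nonneg], by simp⟩
    · simp at hp

lemma Sset_empty_of_gt (h n : ℕ) (k : ℤ) (hk : (h : ℤ) < k) : Sset h n k = ∅ := by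
  ext p
  simp only [Set.mem_empty_iff_false, iff_false]
  rintro ⟨hl, _, hb, hs⟩
  have := hb p.length
  rw [List.take_length] at this
  omega

lemma Sset_empty_of_neg (h n : ℕ) (k : ℤ) (hk : k < 0) : Sset h n k = ∅ := by
  ext p
  simp only [Set.mem_empty_iff_false, iff_false]
  rintro ⟨hl, ⟨_, hnn⟩, _, hs⟩
  have := hnn p.length
  rw [List.take_length] at this
  omega

lemma mem_steps_step {h : ℕ} {s : ℤ} (hs : s ∈ steps h) : DeutschStep s := by
  rcases Finset.mem_insert.1 hs with h1 | h1
  · exact Or.inl h1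
  · obtain ⟨j, _, rfl⟩ := Finset.mem_image.1 h1
    exact Or.inr ⟨j, by ring⟩

lemma Sset_decomp (h n : ℕ) (k : ℤ) (hk0 : 0 ≤ k) (hkh : k ≤ (h : ℤ)) :
    Sset h (n + 1) k = ⋃ s ∈ steps h, (fun q => q ++ [s]) '' Sset h n (k - s) := by
  ext p
  simp only [Set.mem_iUnion, Set.mem_image, exists_prop]
  constructor
  · rintro ⟨hl, ⟨hstep, hnn⟩, hb, hs⟩
    have hne : p ≠ [] := by intro hp; rw [hp] at hl; simp at hl
    obtain ⟨q, s, rfl⟩ : ∃ q s, p = q ++ [s] := ⟨p.dropLast, p.getLast hne, by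
      rw [List.dropLast_append_getLast hne]⟩
    have hql : q.length = n := by
      have := hl
      simp at this
      omega
    have htq : ∀ m : ℕ, (q.take m).sum = ((q ++ [s]).take m).sum ∨ (q.take m).sum = q.sum := by
      intro m
      rcases le_or_gt m q.length with hm | hm
      · left; rw [List.take_append_of_le_length hm]
      · right; rw [List.take_of_length_le (le_of_lt hm)]
    have hqsum : q.sum = ((q ++ [s]).take n).sum := by
      rw [← hql, List.take_left]
    have hqs : (q ++ [s]).sum = q.sum + s := by simp
    have hds : DeutschStep s := hstep s (by simp)
    refine ⟨s, ?_, q, ⟨hql, ⟨fun t ht => hstep t (by simp [ht]), fun m => ?_⟩,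
      fun m => ?_, by omega⟩, rfl⟩
    · -- s ∈ steps h
      rcases hds with h1 | ⟨j, rfl⟩
      · rw [h1]; exact Finset.mem_insert_self 1 _
      · refine Finset.mem_insert_of_mem (Finset.mem_image.2 ⟨j, ?_, by ring⟩)
        have h2 : q.sum ≤ (h : ℤ) := by rw [hqsum]; exact hb n
        have h3 : 0 ≤ k := hk0
        have : q.sum = k + (2 * (j:ℤ) + 1) := by omega
        have : (2 * (j:ℤ) + 1) ≤ h := by omega
        have hjh : (j : ℤ) < h := by omega
        exact Finset.mem_range.2 (by exact_mod_cast hjh)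
    · rcases htq m with he | he
      · rw [he]; exact hnn m
      · rw [he, hqsum]; exact hnn n
    · rcases htq m with he | he
      · rw [he]; exact hb m
      · rw [he, hqsum]; exact hb n
  · rintro ⟨s, hsmem, q, ⟨hql, ⟨hstep, hnn⟩, hb, hsum⟩, rfl⟩
    have hds := mem_steps_step hsmem
    have htq : ∀ m : ℕ, ((q ++ [s]).take m).sum = (q.take m).sum ∨
        ((q ++ [s]).take m).sum = k := by
      intro m
      rcases le_or_gt m q.length with hm | hm
      · left; rw [List.take_append_of_le_length hm]
      · right
        rw [List.take_of_length_le (by simp; omega)]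
        simp; omega
    refine ⟨by simp [hql], ⟨fun t ht => ?_, fun m => ?_⟩, fun m => ?_, by simp; omega⟩
    · rcases List.mem_append.1 ht with h1 | h1
      · exact hstep t h1
      · simp at h1; subst h1; exact hds
    · rcases htq m with he | he
      · rw [he]; exact hnn m
      · rw [he]; exact hk0
    · rcases htq m with he | he
      · rw [he]; exact hb m
      · rw [he]; exact hkh

lemma Sset_finite (h : ℕ) : ∀ n (k : ℤ), (Sset h n k).Finite := by
  intro n
  induction n with
  | zero => intro k; rw [Sset_zero]; split_ifs <;> simp
  | succ n ih =>
    intro k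
    rcases lt_or_ge k 0 with hk | hk
    · rw [Sset_empty_of_neg h _ k hk]; exact Set.finite_empty
    rcases le_or_gt k (h : ℤ) with hk2 | hk2
    · rw [Sset_decomp h n k hk hk2]
      exact Set.Finite.biUnion (Finset.finite_toSet _) fun s _ => (ih (k - s)).image _
    · rw [Sset_empty_of_gt h _ k hk2]; exact Set.finite_empty

lemma Sset_card_decomp (h n : ℕ) (k : ℤ) (hk0 : 0 ≤ k) (hkh : k ≤ (h : ℤ)) :
    (Sset h (n + 1) k).ncard = ∑ s ∈ steps h, (Sset h n (k - s)).ncard := by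
  classical
  have hfin : ∀ s : ℤ, ((fun q => q ++ [s]) '' Sset h n (k - s)).Finite :=
    fun s => (Sset_finite h n (k - s)).image _
  set T : ℤ → Finset (List ℤ) := fun s => (hfin s).toFinset with hT
  have hset : Sset h (n + 1) k = ↑((steps h).biUnion T) := by
    rw [Sset_decomp h n k hk0 hkh, Finset.coe_biUnion]
    simp [hT, Set.Finite.coe_toFinset]
  rw [hset, Set.ncard_coe_finset]
  rw [Finset.card_biUnion]
  · refine Finset.sum_congr rfl fun s _ => ?_
    rw [hT]
    rw [← Set.ncard_coe_finset, Set.Finite.coe_toFinset]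
    exact Set.ncard_image_of_injective _ (List.append_left_injective [s])
  · intro x hx y hy hxy
    rw [Function.onFun, Finset.disjoint_left]
    intro p hpx hpy
    rw [hT, Set.Finite.mem_toFinset] at hpx hpy
    obtain ⟨q1, _, hq1⟩ := hpx
    obtain ⟨q2, _, hq2⟩ := hpy
    have : q1 ++ [x] = q2 ++ [y] := by simp only at hq1 hq2; rw [hq1, hq2]
    have := (List.append_inj' this rfl).2
    simp at this
    exact hxy this

open PowerSeries

lemma sum_steps {M : Type*} [AddCommMonoid M] (h : ℕ) (g : ℤ → M) :
    ∑ s ∈ steps h, g s = g 1 + ∑ j ∈ Finset.range h, g (-(2 * (j : ℤ) + 1)) := by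
  rw [steps, Finset.sum_insert, Finset.sum_image]
  · intro i _ j _ hij
    beta_reduce at hij
    omega
  · rw [Finset.mem_image]
    rintro ⟨j, _, hj⟩
    omega

noncomputable def Fgen (h : ℕ) (k : ℤ) : PowerSeries ℚ :=
  PowerSeries.mk fun n => ((Sset h n k).ncard : ℚ)

lemma Fgen_out {h : ℕ} {k : ℤ} (hk : k < 0 ∨ (h : ℤ) < k) : Fgen h k = 0 := by
  ext n
  rw [Fgen, coeff_mk, map_zero]
  rcases hk with hk | hk
  · rw [Sset_empty_of_neg h n k hk]; simp
  · rw [Sset_empty_of_gt h n k hk]; simp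

lemma Fgen_rel {h : ℕ} {k : ℤ} (hk0 : 0 ≤ k) (hkh : k ≤ (h : ℤ)) :
    Fgen h k = PowerSeries.C (if k = 0 then 1 else 0) +
      PowerSeries.X * ∑ s ∈ steps h, Fgen h (k - s) := by
  ext n
  cases n with
  | zero =>
    rw [map_add, Fgen, coeff_mk, Sset_zero]
    simp only [coeff_zero_eq_constantCoeff, map_mul, constantCoeff_X, zero_mul,
      add_zero, PowerSeries.constantCoeff_C]
    split_ifs <;> simp
  | succ n =>
    rw [map_add, PowerSeries.coeff_C, if_neg (Nat.succ_ne_zero n), zero_add,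
      PowerSeries.coeff_succ_X_mul, map_sum, Fgen, coeff_mk,
      Sset_card_decomp h n k hk0 hkh]
    push_cast
    refine Finset.sum_congr rfl fun s _ => ?_
    rw [Fgen, coeff_mk]

lemma vanish (h : ℕ) (W : ℤ → PowerSeries ℚ)
    (hout : ∀ k : ℤ, (k < 0 ∨ (h : ℤ) < k) → W k = 0)
    (hrel : ∀ k : ℤ, 0 ≤ k → k ≤ (h : ℤ) →
      W k = PowerSeries.X * ∑ s ∈ steps h, W (k - s)) :
    ∀ k, W k = 0 := by
  suffices hc : ∀ n : ℕ, ∀ k : ℤ, (PowerSeries.coeff n) (W k) = 0 by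
    intro k; ext n; rw [hc n k, map_zero]
  intro n
  induction n using Nat.strong_induction_on with
  | _ n ih =>
    intro k
    rcases lt_or_ge k 0 with hk | hk
    · rw [hout k (Or.inl hk), map_zero]
    rcases le_or_gt k (h : ℤ) with hk2 | hk2
    · rw [hrel k hk hk2]
      cases n with
      | zero =>
        rw [coeff_zero_eq_constantCoeff, map_mul, constantCoeff_X, zero_mul]
      | succ n =>
        rw [PowerSeries.coeff_succ_X_mul, map_sum]
        exact Finset.sum_eq_zero fun s _ => ih n (Nat.lt_succ_self n) (k - s)
    · rw [hout k (Or.inr hk2), map_zero]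

lemma KI (d : ℕ → PowerSeries ℚ) (h0 : d 0 = 1) (h1 : d 1 = 1)
    (h2 : d 2 = 1 - PowerSeries.X ^ 2)
    (hrec : ∀ m, 3 ≤ m → d m = d (m - 1) - PowerSeries.X ^ 2 * d (m - 3))
    (h : ℕ) :
    ∀ m, m ≤ h → d m = d (m + 1) +
      ∑ j ∈ Finset.range h,
        (if 2 * j + 1 ≤ m then PowerSeries.X ^ (2 * j + 2) * d (m - (2 * j + 1)) else 0) := by
  intro m
  induction m using Nat.strong_induction_on with
  | _ m ih =>
    intro hm
    match m with
    | 0 =>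
      rw [h0, h1, Finset.sum_eq_zero, add_zero]
      intro j _
      rw [if_neg (by omega)]
    | 1 =>
      have hh : 0 < h := by omega
      rw [Finset.sum_eq_single_of_mem 0 (Finset.mem_range.2 hh)]
      · rw [if_pos (by omega)]
        norm_num
        rw [h0, h1, h2]
        ring
      · intro j _ hj
        rw [if_neg (by omega)]
    | (m + 2) =>
      have hr : d (m + 3) = d (m + 2) - PowerSeries.X ^ 2 * d m := by
        have := hrec (m + 3) (by omega)
        norm_num at this
        exact this
      obtain ⟨h', rfl⟩ : ∃ h', h = h' + 1 := ⟨h - 1, by omega⟩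
      have ihm := ih m (by omega) (by omega)
      have hsum : ∑ j ∈ Finset.range (h' + 1),
          (if 2 * j + 1 ≤ m + 2 then
            PowerSeries.X ^ (2 * j + 2) * d (m + 2 - (2 * j + 1)) else 0) =
          PowerSeries.X ^ 2 * d (m + 1) +
          PowerSeries.X ^ 2 * ∑ j ∈ Finset.range (h' + 1),
            (if 2 * j + 1 ≤ m then
              PowerSeries.X ^ (2 * j + 2) * d (m - (2 * j + 1)) else 0) := by
        rw [Finset.sum_range_succ' _ h']
        have hf0 : (if 2 * 0 + 1 ≤ m + 2 then
            PowerSeries.X ^ (2 * 0 + 2) * d (m + 2 - (2 * 0 + 1)) else 0) =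
            PowerSeries.X ^ 2 * d (m + 1) := by
          rw [if_pos (by omega)]
          norm_num
        rw [hf0]
        have hlast : (if 2 * h' + 1 ≤ m then
            PowerSeries.X ^ (2 * h' + 2) * d (m - (2 * h' + 1)) else 0) = 0 := by
          rw [if_neg (by omega)]
        rw [Finset.sum_range_succ _ h', hlast, add_zero, Finset.mul_sum]
        rw [add_comm]
        congr 1
        refine Finset.sum_congr rfl fun i _ => ?_
        by_cases hc : 2 * i + 1 ≤ m
        · rw [if_pos (by omega : 2 * (i + 1) + 1 ≤ m + 2), if_pos hc]
          have he : m + 2 - (2 * (i + 1) + 1) = m - (2 * i + 1) := by omega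
          rw [he, ← mul_assoc, ← pow_add]
          congr 2
          omega
        · rw [if_neg (by omega), if_neg hc, mul_zero]
      rw [hsum, hr, ihm]
      ring

noncomputable def Gfun (d : ℕ → PowerSeries ℚ) (h : ℕ) (k : ℤ) : PowerSeries ℚ :=
  if 0 ≤ k ∧ k ≤ (h : ℤ) then PowerSeries.X ^ k.toNat * d (h - k.toNat) else 0

lemma Gfun_nat (d : ℕ → PowerSeries ℚ) (h K : ℕ) (hK : K ≤ h) :
    Gfun d h (K : ℤ) = PowerSeries.X ^ K * d (h - K) := by
  rw [Gfun, if_pos ⟨Int.natCast_nonneg K, by exact_mod_cast hK⟩, Int.toNat_natCast]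

lemma Gfun_out (d : ℕ → PowerSeries ℚ) (h : ℕ) {k : ℤ} (hk : k < 0 ∨ (h : ℤ) < k) :
    Gfun d h k = 0 := by
  rw [Gfun, if_neg (by omega)]

lemma Grel (d : ℕ → PowerSeries ℚ) (h0 : d 0 = 1) (h1 : d 1 = 1)
    (h2 : d 2 = 1 - PowerSeries.X ^ 2)
    (hrec : ∀ m, 3 ≤ m → d m = d (m - 1) - PowerSeries.X ^ 2 * d (m - 3))
    (h : ℕ) (k : ℤ) (hk0 : 0 ≤ k) (hkh : k ≤ (h : ℤ)) :
    Gfun d h k = (if k = 0 then d (h + 1) else 0) +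
      PowerSeries.X * ∑ s ∈ steps h, Gfun d h (k - s) := by
  lift k to ℕ using hk0 with K
  have hKh : K ≤ h := by exact_mod_cast hkh
  rw [sum_steps]
  have hsum : ∀ j ∈ Finset.range h, Gfun d h ((K : ℤ) - -(2 * (j : ℤ) + 1)) =
      if K + (2 * j + 1) ≤ h then
        PowerSeries.X ^ (K + (2 * j + 1)) * d (h - (K + (2 * j + 1))) else 0 := by
    intro j _
    have he : (K : ℤ) - -(2 * (j : ℤ) + 1) = ((K + (2 * j + 1) : ℕ) : ℤ) := by push_cast; ring
    rw [he]
    by_cases hc : K + (2 * j + 1) ≤ h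
    · rw [Gfun_nat d h _ hc, if_pos hc]
    · rw [Gfun_out d h (Or.inr (by exact_mod_cast Nat.lt_of_not_le hc)), if_neg hc]
  rw [Finset.sum_congr rfl hsum]
  match K with
  | 0 =>
    have hneg : Gfun d h (((0:ℕ):ℤ) - 1) = 0 := Gfun_out d h (Or.inl (by norm_num))
    rw [if_pos (show ((0:ℕ):ℤ) = 0 by norm_num), hneg, zero_add]
    rw [Gfun_nat d h 0 (Nat.zero_le h)]
    simp only [pow_zero, one_mul, Nat.sub_zero, Nat.zero_add]
    rw [KI d h0 h1 h2 hrec h h le_rfl, Finset.mul_sum]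
    congr 1
    refine Finset.sum_congr rfl fun j _ => ?_
    split_ifs with hc
    · ring
    · rw [mul_zero]
  | (K' + 1) =>
    rw [if_neg (by omega), zero_add]
    have he1 : ((K' + 1 : ℕ) : ℤ) - 1 = ((K' : ℕ) : ℤ) := by push_cast; ring
    rw [he1, Gfun_nat d h K' (by omega), Gfun_nat d h (K' + 1) hKh]
    set m := h - (K' + 1) with hm
    have hmh : m ≤ h := by omega
    have he2 : h - K' = m + 1 := by omega
    rw [he2, KI d h0 h1 h2 hrec h m hmh, mul_add, mul_add, Finset.mul_sum, Finset.mul_sum]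
    congr 1
    · ring
    refine Finset.sum_congr rfl fun j _ => ?_
    have hceq : (K' + 1 + (2 * j + 1) ≤ h) ↔ (2 * j + 1 ≤ m) := by omega
    by_cases hc : 2 * j + 1 ≤ m
    · rw [if_pos hc, if_pos (hceq.2 hc)]
      have he3 : h - (K' + 1 + (2 * j + 1)) = m - (2 * j + 1) := by omega
      rw [he3]
      ring
    · rw [if_neg hc, if_neg (fun hx => hc (hceq.1 hx)), mul_zero, mul_zero]

/-- With d₀ = 1, d₁ = 1, d₂ = 1 - z², dₘ = dₘ₋₁ - z²dₘ₋₃, the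
generating function of Deutsch paths bounded by h and ending at level k (0 ≤ k ≤ h)
is zᵏ·d_{h-k}/d_{h+1}; equivalently f_k⁽ʰ⁾ · d_{h+1} = zᵏ · d_{h-k}. -/
theorem deutschCountBounded_generating_function
    (d : ℕ → PowerSeries ℚ) (h0 : d 0 = 1) (h1 : d 1 = 1)
    (h2 : d 2 = 1 - PowerSeries.X ^ 2)
    (hrec : ∀ m, 3 ≤ m → d m = d (m - 1) - PowerSeries.X ^ 2 * d (m - 3))
    (h k : ℕ) (hk : k ≤ h) :
    (PowerSeries.mk fun n => (deutschCountBounded h n k : ℚ)) * d (h + 1) =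
      PowerSeries.X ^ k * d (h - k) := by
  have hvan : ∀ kk : ℤ, Fgen h kk * d (h + 1) - Gfun d h kk = 0 := by
    apply vanish h
    · intro kk hkk
      rw [Fgen_out hkk, Gfun_out d h hkk, zero_mul, sub_zero]
    · intro kk hk0 hkh
      rw [Fgen_rel hk0 hkh, Grel d h0 h1 h2 hrec h kk hk0 hkh,
        add_mul, mul_assoc, Finset.sum_mul]
      have hC : PowerSeries.C (if kk = 0 then (1:ℚ) else 0) * d (h + 1) =
          (if kk = 0 then d (h + 1) else 0) := by
        split_ifs <;> simp
      rw [hC, Finset.sum_sub_distrib, mul_sub]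
      abel
  have hmain := hvan ((k : ℕ) : ℤ)
  rw [sub_eq_zero, Gfun_nat d h k hk] at hmain
  have hmk : (PowerSeries.mk fun n => (deutschCountBounded h n k : ℚ)) =
      Fgen h ((k : ℕ) : ℤ) := by
    ext n
    rw [coeff_mk, Fgen, coeff_mk, deutschCountBounded_eq_ncard]
  rw [hmk, hmain]
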